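/- For the linear tree L_n = •—•—···—• with n vertices and all edges oriented in the same direction, the coefficient a_{L_n} defined by the recursion a_T = (1/n_T) Σ_{v} (−1)^{n_v^+} ∏_s a_{T_s(v)}, a_• = 1, satisfies: a_{L₁}=1, a_{L₃}=−1/3, a_{L₅}=2/15, a_{L₇}=−17/315, and a_{L_n}=0 for even n. -/

import Mathlib

open scoped Classical

/-- An (oriented, labelled) graph on a finite set of natural-number vertices,
given by its vertex set and an oriented edge relation. -/
structure DiGraph where
  verts : Finset ℕ
  E : ℕ → ℕ → Prop

namespace DiGraph

/-- The underlying (unoriented) simple graph on the vertex set. -/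
def symGraph (G : DiGraph) : SimpleGraph {x : ℕ // x ∈ G.verts} where
  Adj a b := (G.E a.1 b.1 ∨ G.E b.1 a.1) ∧ a ≠ b
  symm := ⟨fun a b h => ⟨h.1.symm, h.2.symm⟩⟩
  loopless := ⟨fun a h => h.2 rfl⟩

/-- `G` is an oriented unrooted labelled tree: its edges join vertices of `G`,
no edge occurs in both orientations, and the underlying simple graph is a tree. -/
def IsOTree (G : DiGraph) : Prop :=
  (∀ i j, G.E i j → i ∈ G.verts ∧ j ∈ G.verts) ∧
  (∀ i j, G.E i j → ¬ G.E j i) ∧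
  G.symGraph.IsTree

/-- The number `n_v⁺` of edges oriented into the vertex `v`. -/
noncomputable def inDeg (G : DiGraph) (v : ℕ) : ℕ :=
  (G.verts.filter fun w => G.E w v).card

/-- The graph obtained by deleting the vertex `v`. -/
def delV (G : DiGraph) (v : ℕ) : DiGraph :=
  ⟨G.verts.erase v, fun i j => G.E i j ∧ i ≠ v ∧ j ≠ v⟩

/-- The subgraph induced on a set `s` of vertices. -/
def induce (G : DiGraph) (s : Finset ℕ) : DiGraph :=
  ⟨s, fun i j => G.E i j ∧ i ∈ s ∧ j ∈ s⟩

/-- The vertex set of a connected component of (the underlying graph of) `G`. -/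
noncomputable def compVerts (G : DiGraph) (c : G.symGraph.ConnectedComponent) : Finset ℕ :=
  G.verts.filter fun x => ∃ h : x ∈ G.verts, G.symGraph.connectedComponentMk ⟨x, h⟩ = c

/-- The subgraph of `G` given by a connected component. -/
noncomputable def component (G : DiGraph) (c : G.symGraph.ConnectedComponent) : DiGraph :=
  G.induce (G.compVerts c)

/-- `a : DiGraph → ℚ` satisfies the defining recursion of the tree coefficients `a_T`:
`a_• = 1` for the one-vertex tree, and for a tree `T` with at least two vertices
`a_T = (1/n_T) Σ_{v ∈ V_T} (−1)^{n_v⁺} ∏_s a_{T_s(v)}`,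
the product running over the connected components of `T` with the vertex `v` deleted. -/
def ARec (a : DiGraph → ℚ) : Prop :=
  (∀ G : DiGraph, G.IsOTree → G.verts.card = 1 → a G = 1) ∧
  (∀ G : DiGraph, G.IsOTree → 2 ≤ G.verts.card →
    a G = (1 / (G.verts.card : ℚ)) * ∑ v ∈ G.verts, (-1 : ℚ) ^ (G.inDeg v) *
      ∏ᶠ c : (G.delV v).symGraph.ConnectedComponent, a ((G.delV v).component c))

end DiGraph

/-- The linear tree `L_{n+1} = •—•—···—•` with `n+1` vertices `0,…,n` and all edges
`i → i+1` oriented in the same direction. -/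
def linTree (n : ℕ) : DiGraph :=
  ⟨Finset.range (n + 1), fun i j => j = i + 1 ∧ j ≤ n⟩

/-- canonical path on interval [m, M] -/
def P (m M : ℕ) : DiGraph :=
  ⟨Finset.Icc m M, fun i j => j = i + 1 ∧ i ∈ Finset.Icc m M ∧ j ∈ Finset.Icc m M⟩

lemma reach_inv {V : Type*} {G : SimpleGraph V} (f : V → Prop)
    (h : ∀ a b, G.Adj a b → (f a ↔ f b)) {a b : V} (hr : G.Reachable a b) : f a ↔ f b := by
  refine hr.elim fun w => ?_
  induction w with
  | nil => exact Iff.rfl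
  | cons h' p ih => exact (h _ _ h').trans (ih ⟨p⟩)

lemma P_adj {m M : ℕ} {a b : {x : ℕ // x ∈ (P m M).verts}} :
    (P m M).symGraph.Adj a b ↔ (b.1 = a.1 + 1 ∨ a.1 = b.1 + 1) := by
  constructor
  · rintro ⟨(⟨h, -⟩ | ⟨h, -⟩), -⟩
    · exact Or.inl h
    · exact Or.inr h
  · intro h
    have hne : a ≠ b := by
      rcases h with h | h <;> · intro he; rw [he] at h; omega
    rcases h with h | h
    · exact ⟨Or.inl ⟨h, a.2, b.2⟩, hne⟩
    · exact ⟨Or.inr ⟨h, b.2, a.2⟩, hne⟩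

lemma P_reach_aux {m M : ℕ} (d : ℕ) (x : ℕ) (hx : x ∈ (P m M).verts)
    (hxd : x + d ∈ (P m M).verts) :
    (P m M).symGraph.Reachable ⟨x, hx⟩ ⟨x + d, hxd⟩ := by
  induction d with
  | zero => exact SimpleGraph.Reachable.refl _
  | succ d ih =>
      have hx' : x + d ∈ (P m M).verts := by
        have h1 := hx; have h2 := hxd
        simp only [P, Finset.mem_Icc] at h1 h2 ⊢; omega
      exact (ih hx').trans (SimpleGraph.Adj.reachable (P_adj.2 (Or.inl rfl)))

lemma P_preconnected {m M : ℕ} : (P m M).symGraph.Preconnected := by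
  intro a b
  rcases le_total a.1 b.1 with h | h
  · obtain ⟨d, hd⟩ := Nat.exists_eq_add_of_le h
    have := P_reach_aux d a.1 a.2 (hd ▸ b.2)
    convert this using 2 <;> exact Subtype.ext hd
  · obtain ⟨d, hd⟩ := Nat.exists_eq_add_of_le h
    have := P_reach_aux d b.1 b.2 (hd ▸ a.2)
    exact (by convert this using 2 <;> exact Subtype.ext hd : (P m M).symGraph.Reachable b a).symm

lemma P_bridge {m M : ℕ} {a b : {x : ℕ // x ∈ (P m M).verts}} (hab : b.1 = a.1 + 1) :
    ¬((P m M).symGraph \ SimpleGraph.fromEdgeSet {s(a, b)}).Reachable a b := by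
  intro hr
  have key := reach_inv (G := (P m M).symGraph \ SimpleGraph.fromEdgeSet {s(a, b)})
    (fun x => x.1 ≤ a.1) ?_ hr
  · omega
  · rintro x y ⟨hadj, hne⟩
    rw [SimpleGraph.fromEdgeSet_adj] at hne
    have hxy := P_adj.1 hadj
    have hne' : ¬ (s(x, y) = s(a, b)) := fun h => hne ⟨h, hadj.ne⟩
    rw [Sym2.eq_iff] at hne'
    push_neg at hne'
    constructor
    · intro hx
      by_contra hy
      -- then x = a, y = b
      have hxa : x = a := Subtype.ext (by omega)
      have hyb : y = b := Subtype.ext (by omega)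
      exact (hne'.1 hxa) hyb
    · intro hy
      by_contra hx
      have hxb : x = b := Subtype.ext (by omega)
      have hya : y = a := Subtype.ext (by omega)
      exact (hne'.2 hxb) hya

lemma P_isOTree {m M : ℕ} (h : m ≤ M) : (P m M).IsOTree := by
  refine ⟨fun i j hij => ⟨hij.2.1, hij.2.2⟩,
    fun i j hij hji => by obtain ⟨h1,-,-⟩ := hij; obtain ⟨h2,-,-⟩ := hji; omega, ?_, ?_⟩
  · haveI : Nonempty {x : ℕ // x ∈ (P m M).verts} :=
      ⟨⟨m, by simp only [P, Finset.mem_Icc]; omega⟩⟩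
    exact SimpleGraph.Connected.mk P_preconnected
  · rw [SimpleGraph.isAcyclic_iff_forall_adj_isBridge]
    intro x y hxy
    rcases P_adj.1 hxy with h1 | h1
    · exact P_bridge h1
    · have : s(x, y) = s(y, x) := Sym2.eq_swap
      rw [this]
      exact P_bridge h1

lemma DG_ext {G H : DiGraph} (h1 : G.verts = H.verts)
    (h2 : ∀ i j, G.E i j ↔ H.E i j) : G = H := by
  cases G; cases H
  simp only [DiGraph.mk.injEq]
  exact ⟨h1, funext fun i => funext fun j => propext (h2 i j)⟩

lemma P_card {m M : ℕ} : (P m M).verts.card = M + 1 - m := by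
  simp [P, Nat.card_Icc]

lemma P_inDeg_pow {m M v : ℕ} (hv : v ∈ Finset.Icc m M) :
    ((-1 : ℚ)) ^ ((P m M).inDeg v) = if v = m then 1 else -1 := by
  rw [Finset.mem_Icc] at hv
  by_cases hvm : v = m
  · have : (P m M).inDeg v = 0 := by
      rw [DiGraph.inDeg, Finset.card_eq_zero, Finset.filter_eq_empty_iff]
      rintro w hw ⟨h1, -, -⟩
      rw [P] at hw; simp only [Finset.mem_Icc] at hw; omega
    rw [this]; simp [hvm]
  · have : (P m M).verts.filter (fun w => (P m M).E w v) = {v - 1} := by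
      ext w
      simp only [P, Finset.mem_filter, Finset.mem_Icc, Finset.mem_singleton]
      constructor
      · rintro ⟨hw, h1, -, -⟩; omega
      · rintro rfl
        omega
    rw [DiGraph.inDeg, this]
    simp [hvm]

lemma linTree_eq_P (n : ℕ) : linTree n = P 0 n := by
  refine DG_ext ?_ ?_
  · ext x; simp [linTree, P, Finset.mem_Icc, Nat.lt_succ_iff]
  · intro i j
    simp only [linTree, P, Finset.mem_Icc]
    constructor
    · rintro ⟨rfl, h⟩; exact ⟨rfl, ⟨Nat.zero_le _, by omega⟩, ⟨Nat.zero_le _, h⟩⟩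
    · rintro ⟨rfl, -, -, h⟩; exact ⟨rfl, h⟩

section DelV

variable {m M v : ℕ}

lemma delV_verts_mem {y : ℕ} :
    y ∈ ((P m M).delV v).verts ↔ y ≠ v ∧ m ≤ y ∧ y ≤ M := by
  simp [DiGraph.delV, P, Finset.mem_erase, Finset.mem_Icc]

lemma delV_adj {x y : {z : ℕ // z ∈ ((P m M).delV v).verts}} :
    ((P m M).delV v).symGraph.Adj x y ↔ (y.1 = x.1 + 1 ∨ x.1 = y.1 + 1) := by
  have hx := delV_verts_mem.1 x.2
  have hy := delV_verts_mem.1 y.2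
  constructor
  · rintro ⟨(⟨⟨h, -⟩, -⟩ | ⟨⟨h, -⟩, -⟩), -⟩
    · exact Or.inl h
    · exact Or.inr h
  · intro h
    have hne : x ≠ y := by
      rcases h with h | h <;> · intro he; rw [he] at h; omega
    have hmem : ∀ z : ℕ, z ≠ v → m ≤ z → z ≤ M → z ∈ Finset.Icc m M :=
      fun z _ h1 h2 => Finset.mem_Icc.2 ⟨h1, h2⟩
    rcases h with h | h
    · exact ⟨Or.inl ⟨⟨h, hmem _ hx.1 hx.2.1 hx.2.2, hmem _ hy.1 hy.2.1 hy.2.2⟩,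
        hx.1, hy.1⟩, hne⟩
    · exact ⟨Or.inr ⟨⟨h, hmem _ hy.1 hy.2.1 hy.2.2, hmem _ hx.1 hx.2.1 hx.2.2⟩,
        hy.1, hx.1⟩, hne⟩

lemma delV_side {x y : {z : ℕ // z ∈ ((P m M).delV v).verts}}
    (h : ((P m M).delV v).symGraph.Reachable x y) : (x.1 < v ↔ y.1 < v) := by
  refine reach_inv (fun z : {z : ℕ // z ∈ ((P m M).delV v).verts} => z.1 < v) ?_ h
  intro a b hab
  have ha := (delV_verts_mem.1 a.2).1
  have hb := (delV_verts_mem.1 b.2).1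
  rcases delV_adj.1 hab with h1 | h1 <;> omega

lemma delV_reach_aux (d x : ℕ) (hx : x ∈ ((P m M).delV v).verts)
    (hxd : x + d ∈ ((P m M).delV v).verts) (hside : v < x ∨ x + d < v) :
    ((P m M).delV v).symGraph.Reachable ⟨x, hx⟩ ⟨x + d, hxd⟩ := by
  induction d with
  | zero => exact SimpleGraph.Reachable.refl _
  | succ d ih =>
      have h1 := delV_verts_mem.1 hx
      have h2 := delV_verts_mem.1 hxd
      have hx' : x + d ∈ ((P m M).delV v).verts := delV_verts_mem.2 (by omega)
      exact (ih hx' (by omega)).trans (SimpleGraph.Adj.reachable (delV_adj.2 (Or.inl rfl)))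

lemma delV_reach {x y : ℕ} (hx : x ∈ ((P m M).delV v).verts)
    (hy : y ∈ ((P m M).delV v).verts) (hside : x < v ↔ y < v) :
    ((P m M).delV v).symGraph.Reachable ⟨x, hx⟩ ⟨y, hy⟩ := by
  have hx' := delV_verts_mem.1 hx
  have hy' := delV_verts_mem.1 hy
  rcases le_total x y with h | h
  · obtain ⟨d, rfl⟩ := Nat.exists_eq_add_of_le h
    exact delV_reach_aux d x hx hy (by omega)
  · obtain ⟨d, rfl⟩ := Nat.exists_eq_add_of_le h
    exact (delV_reach_aux d y hy hx (by omega)).symm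

lemma compVerts_left (hmv : m < v) (hvM : v ≤ M) {x : ℕ} (hx : x ∈ ((P m M).delV v).verts) (hxv : x < v) :
    ((P m M).delV v).compVerts (((P m M).delV v).symGraph.connectedComponentMk ⟨x, hx⟩) =
      Finset.Icc m (v - 1) := by
  ext y
  simp only [DiGraph.compVerts, Finset.mem_filter, Finset.mem_Icc]
  constructor
  · rintro ⟨hy, hy2, hc⟩
    have := delV_side (SimpleGraph.ConnectedComponent.exact hc)
    have hy' := delV_verts_mem.1 hy
    simp only at this
    omega
  · intro hy
    have hyv : y ∈ ((P m M).delV v).verts := delV_verts_mem.2 (by omega)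
    refine ⟨hyv, hyv, SimpleGraph.ConnectedComponent.sound ?_⟩
    refine delV_reach hyv hx ?_
    omega

lemma compVerts_right (hmv : m ≤ v) (hvM : v < M) {x : ℕ} (hx : x ∈ ((P m M).delV v).verts) (hxv : v < x) :
    ((P m M).delV v).compVerts (((P m M).delV v).symGraph.connectedComponentMk ⟨x, hx⟩) =
      Finset.Icc (v + 1) M := by
  ext y
  simp only [DiGraph.compVerts, Finset.mem_filter, Finset.mem_Icc]
  constructor
  · rintro ⟨hy, hy2, hc⟩
    have := delV_side (SimpleGraph.ConnectedComponent.exact hc)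
    have hy' := delV_verts_mem.1 hy
    simp only at this
    omega
  · intro hy
    have hyv : y ∈ ((P m M).delV v).verts := delV_verts_mem.2 (by omega)
    refine ⟨hyv, hyv, SimpleGraph.ConnectedComponent.sound ?_⟩
    refine delV_reach hyv hx ?_
    omega

lemma comp_left (hmv : m < v) (hvM : v ≤ M) {x : ℕ}
    (hx : x ∈ ((P m M).delV v).verts) (hxv : x < v) :
    ((P m M).delV v).component (((P m M).delV v).symGraph.connectedComponentMk ⟨x, hx⟩) =
      P m (v - 1) := by
  rw [DiGraph.component, compVerts_left hmv hvM hx hxv]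
  refine DG_ext rfl ?_
  intro i j
  simp only [DiGraph.induce, DiGraph.delV, P, Finset.mem_Icc]
  constructor
  · rintro ⟨⟨⟨hj, -, -⟩, -, -⟩, h1, h2⟩; exact ⟨hj, h1, h2⟩
  · rintro ⟨rfl, h1, h2⟩
    exact ⟨⟨⟨rfl, ⟨by omega, by omega⟩, by omega, by omega⟩, by omega, by omega⟩, h1, h2⟩

lemma comp_right (hmv : m ≤ v) (hvM : v < M) {x : ℕ}
    (hx : x ∈ ((P m M).delV v).verts) (hxv : v < x) :
    ((P m M).delV v).component (((P m M).delV v).symGraph.connectedComponentMk ⟨x, hx⟩) =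
      P (v + 1) M := by
  rw [DiGraph.component, compVerts_right hmv hvM hx hxv]
  refine DG_ext rfl ?_
  intro i j
  simp only [DiGraph.induce, DiGraph.delV, P, Finset.mem_Icc]
  constructor
  · rintro ⟨⟨⟨hj, -, -⟩, -, -⟩, h1, h2⟩; exact ⟨hj, h1, h2⟩
  · rintro ⟨rfl, h1, h2⟩
    exact ⟨⟨⟨rfl, ⟨by omega, by omega⟩, by omega, by omega⟩, by omega, by omega⟩, h1, h2⟩

end DelV

section ProdComp

variable {m M v : ℕ}

lemma prod_comp (a : DiGraph → ℚ) (hmv : m ≤ v) (hvM : v ≤ M) (hmM : m < M) :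
    (∏ᶠ c : ((P m M).delV v).symGraph.ConnectedComponent, a (((P m M).delV v).component c)) =
    (if m < v then a (P m (v - 1)) else 1) * (if v < M then a (P (v + 1) M) else 1) := by
  haveI : Fintype (((P m M).delV v).symGraph.ConnectedComponent) := Fintype.ofFinite _
  rw [finprod_eq_prod_of_fintype]
  by_cases h1 : m < v <;> by_cases h2 : v < M
  · -- two components
    have hx1 : v - 1 ∈ ((P m M).delV v).verts := delV_verts_mem.2 (by omega)
    have hx2 : v + 1 ∈ ((P m M).delV v).verts := delV_verts_mem.2 (by omega)
    set c1 := ((P m M).delV v).symGraph.connectedComponentMk ⟨v - 1, hx1⟩ with hc1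
    set c2 := ((P m M).delV v).symGraph.connectedComponentMk ⟨v + 1, hx2⟩ with hc2
    have hne : c1 ≠ c2 := by
      intro h
      have := delV_side (SimpleGraph.ConnectedComponent.exact h)
      simp only at this
      omega
    have hclass : ∀ c : ((P m M).delV v).symGraph.ConnectedComponent, c = c1 ∨ c = c2 := by
      intro c
      obtain ⟨y, rfl⟩ := c.exists_rep
      have hy := delV_verts_mem.1 y.2
      rcases Nat.lt_or_ge y.1 v with hside | hside
      · exact Or.inl (SimpleGraph.ConnectedComponent.sound (delV_reach y.2 hx1 (by omega)))
      · exact Or.inr (SimpleGraph.ConnectedComponent.sound (delV_reach y.2 hx2 (by omega)))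
    have huniv : (Finset.univ : Finset (((P m M).delV v).symGraph.ConnectedComponent))
        = {c1, c2} := by
      ext c
      simp only [Finset.mem_univ, Finset.mem_insert, Finset.mem_singleton, true_iff]
      exact hclass c
    rw [huniv, Finset.prod_pair hne, comp_left h1 hvM hx1 (by omega),
      comp_right hmv h2 hx2 (by omega)]
    simp [h1, h2]
  · -- v = M, single left component
    have hvM' : v = M := by omega
    have hx1 : v - 1 ∈ ((P m M).delV v).verts := delV_verts_mem.2 (by omega)
    set c1 := ((P m M).delV v).symGraph.connectedComponentMk ⟨v - 1, hx1⟩ with hc1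
    have hclass : ∀ c : ((P m M).delV v).symGraph.ConnectedComponent, c = c1 := by
      intro c
      obtain ⟨y, rfl⟩ := c.exists_rep
      have hy := delV_verts_mem.1 y.2
      exact SimpleGraph.ConnectedComponent.sound (delV_reach y.2 hx1 (by omega))
    have huniv : (Finset.univ : Finset (((P m M).delV v).symGraph.ConnectedComponent))
        = {c1} := by
      ext c
      simp only [Finset.mem_univ, Finset.mem_singleton, true_iff]
      exact hclass c
    rw [huniv, Finset.prod_singleton, comp_left h1 hvM hx1 (by omega)]
    simp [h1, h2]
  · -- v = m, single right component
    have hvm : v = m := by omega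
    have hx2 : v + 1 ∈ ((P m M).delV v).verts := delV_verts_mem.2 (by omega)
    set c2 := ((P m M).delV v).symGraph.connectedComponentMk ⟨v + 1, hx2⟩ with hc2
    have hclass : ∀ c : ((P m M).delV v).symGraph.ConnectedComponent, c = c2 := by
      intro c
      obtain ⟨y, rfl⟩ := c.exists_rep
      have hy := delV_verts_mem.1 y.2
      exact SimpleGraph.ConnectedComponent.sound (delV_reach y.2 hx2 (by omega))
    have huniv : (Finset.univ : Finset (((P m M).delV v).symGraph.ConnectedComponent))
        = {c2} := by
      ext c
      simp only [Finset.mem_univ, Finset.mem_singleton, true_iff]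
      exact hclass c
    rw [huniv, Finset.prod_singleton, comp_right hmv h2 hx2 (by omega)]
    simp [h1, h2]
  · omega

end ProdComp


lemma aP_rec (a : DiGraph → ℚ) (ha : DiGraph.ARec a) {m M : ℕ} (hmM : m < M) :
    a (P m M) = (1 / ((M + 1 - m : ℕ) : ℚ)) * ∑ v ∈ Finset.Icc m M,
      (if v = m then (1 : ℚ) else -1) *
        ((if m < v then a (P m (v - 1)) else 1) * (if v < M then a (P (v + 1) M) else 1)) := by
  have h2 : 2 ≤ (P m M).verts.card := by rw [P_card]; omega
  rw [ha.2 _ (P_isOTree (le_of_lt hmM)) h2, P_card]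
  congr 1
  refine Finset.sum_congr rfl fun v hv => ?_
  have hv' := Finset.mem_Icc.1 hv
  rw [P_inDeg_pow hv, prod_comp a hv'.1 hv'.2 hmM]

lemma aP_one (a : DiGraph → ℚ) (ha : DiGraph.ARec a) (m : ℕ) : a (P m m) = 1 :=
  ha.1 _ (P_isOTree le_rfl) (by rw [P_card]; omega)

lemma aP_shift (a : DiGraph → ℚ) (ha : DiGraph.ARec a) :
    ∀ k m : ℕ, a (P m (m + k)) = a (P 0 k) := by
  intro k
  induction k using Nat.strong_induction_on with
  | _ k IH =>
    intro m
    have IH' : ∀ m' M' : ℕ, M' - m' < k → m' ≤ M' → a (P m' M') = a (P 0 (M' - m')) := by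
      intro m' M' h1 h2
      have := IH (M' - m') h1 m'
      rwa [Nat.add_sub_cancel' h2] at this
    rcases Nat.eq_zero_or_pos k with rfl | hk
    · rw [Nat.add_zero, aP_one a ha, aP_one a ha]
    · rw [aP_rec a ha (show m < m + k by omega), aP_rec a ha (show 0 < k by omega)]
      have hcard : m + k + 1 - m = k + 1 - 0 := by omega
      rw [hcard]
      congr 1
      rw [show Finset.Icc m (m + k) = Finset.map (addLeftEmbedding m) (Finset.Icc 0 k) by
        rw [Finset.map_add_left_Icc, Nat.add_zero], Finset.sum_map]
      refine Finset.sum_congr rfl fun w hw => ?_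
      have hw' := Finset.mem_Icc.1 hw
      have he : (addLeftEmbedding m) w = m + w := rfl
      rw [he]
      by_cases h0 : w = 0
      · subst h0
        rw [if_pos (by omega : m + 0 = m), if_pos rfl,
            if_neg (by omega : ¬ m < m + 0), if_neg (by omega : ¬ (0:ℕ) < 0),
            if_pos (by omega : m + 0 < m + k), if_pos (by omega : 0 < k),
            IH' (m + 0 + 1) (m + k) (by omega) (by omega),
            IH' (0 + 1) k (by omega) (by omega),
            show m + k - (m + 0 + 1) = k - (0 + 1) by omega]
      · by_cases hk1 : w < k
        · rw [if_neg (by omega : ¬ m + w = m), if_neg h0,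
              if_pos (by omega : m < m + w), if_pos (by omega : 0 < w),
              if_pos (by omega : m + w < m + k), if_pos hk1,
              IH' m (m + w - 1) (by omega) (by omega),
              IH' (m + w + 1) (m + k) (by omega) (by omega),
              show m + w - 1 - m = w - 1 by omega,
              IH' (w + 1) k (by omega) (by omega),
              show m + k - (m + w + 1) = k - (w + 1) by omega]
        · have hwk : w = k := by omega
          subst hwk
          rw [if_neg (by omega : ¬ m + w = m), if_neg h0,
              if_pos (by omega : m < m + w), if_pos (by omega : 0 < w),
              if_neg (by omega : ¬ m + w < m + w), if_neg (by omega : ¬ w < w),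
              IH' m (m + w - 1) (by omega) (by omega),
              show m + w - 1 - m = w - 1 by omega]

lemma A_rec (a : DiGraph → ℚ) (ha : DiGraph.ARec a) {k : ℕ} (hk : 0 < k) :
    a (P 0 k) = (1 / ((k + 1 : ℕ) : ℚ)) * ∑ v ∈ Finset.range (k + 1),
      (if v = 0 then (1 : ℚ) else -1) *
        ((if 0 < v then a (P 0 (v - 1)) else 1) * (if v < k then a (P 0 (k - v - 1)) else 1)) := by
  rw [aP_rec a ha hk]
  have hIcc : Finset.Icc 0 k = Finset.range (k + 1) := by
    ext x; simp [Nat.lt_succ_iff]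
  rw [show k + 1 - 0 = k + 1 by omega, hIcc]
  congr 1
  refine Finset.sum_congr rfl fun v hv => ?_
  have hv' := Finset.mem_range.1 hv
  by_cases hvk : v < k
  · rw [if_pos hvk, if_pos hvk,
      show a (P (v + 1) k) = a (P 0 (k - v - 1)) by
        have := aP_shift a ha (k - v - 1) (v + 1)
        rwa [show v + 1 + (k - v - 1) = k by omega] at this]
  · rw [if_neg hvk, if_neg hvk]

lemma A_odd (a : DiGraph → ℚ) (ha : DiGraph.ARec a) :
    ∀ n : ℕ, Odd n → a (P 0 n) = 0 := by
  intro n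
  induction n using Nat.strong_induction_on with
  | _ n IH =>
    intro hn
    obtain ⟨t, rfl⟩ := hn
    have hpos : 0 < 2 * t + 1 := by omega
    rw [A_rec a ha hpos]
    set n := 2 * t + 1 with hdefn
    set C := a (P 0 (n - 1)) with hC
    have hterm : ∀ v ∈ Finset.range (n + 1),
        (if v = 0 then (1 : ℚ) else -1) *
          ((if 0 < v then a (P 0 (v - 1)) else 1) * (if v < n then a (P 0 (n - v - 1)) else 1))
        = (if v = 0 then C else 0) + (if v = n then -C else 0) := by
      intro v hv
      have hv' := Finset.mem_range.1 hv
      by_cases h0 : v = 0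
      · subst h0
        rw [if_pos rfl, if_pos rfl, if_neg (by omega : ¬ (0:ℕ) = n),
          if_neg (by omega : ¬ (0:ℕ) < 0), if_pos (by omega : 0 < n),
          show n - 0 - 1 = n - 1 by omega]
        ring
      · by_cases hvn : v = n
        · subst hvn
          rw [if_neg h0, if_neg h0, if_pos rfl, if_pos (by omega : 0 < n),
            if_neg (by omega : ¬ n < n)]
          ring
        · have hv1 : v < n := by omega
          rw [if_neg h0, if_neg h0, if_neg hvn, if_pos (by omega : 0 < v), if_pos hv1]
          have hzero : a (P 0 (v - 1)) * a (P 0 (n - v - 1)) = 0 := by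
            rcases Nat.even_or_odd (v - 1) with he | ho
            · obtain ⟨s, hs⟩ := he
              have : Odd (n - v - 1) := ⟨t - s - 1, by omega⟩
              rw [IH (n - v - 1) (by omega) this, mul_zero]
            · rw [IH (v - 1) (by omega) ho, zero_mul]
          rw [hzero]
          ring
    rw [Finset.sum_congr rfl hterm, Finset.sum_add_distrib,
      Finset.sum_ite_eq' (Finset.range (n + 1)) 0 (fun _ => C),
      Finset.sum_ite_eq' (Finset.range (n + 1)) n (fun _ => -C),
      if_pos (by simp), if_pos (by simp [Nat.lt_succ_iff])]
    ring


/-- For the linear tree `L_n` with `n` vertices and all edges oriented in the same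
direction, the coefficients defined by the recursion
`a_T = (1/n_T) Σ_v (−1)^{n_v⁺} ∏_s a_{T_s(v)}`, `a_• = 1`, satisfy
`a_{L₁} = 1`, `a_{L₃} = −1/3`, `a_{L₅} = 2/15`, `a_{L₇} = −17/315`, and `a_{L_n} = 0`
for even `n`.  (Here `linTree k` is the linear tree with `k+1` vertices.) -/
theorem aT_linear_tree_values (a : DiGraph → ℚ) (ha : DiGraph.ARec a) :
    a (linTree 0) = 1 ∧ a (linTree 2) = -1/3 ∧ a (linTree 4) = 2/15 ∧
      a (linTree 6) = -17/315 ∧ ∀ n : ℕ, Odd n → a (linTree n) = 0 := by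
  have A0 : a (P 0 0) = 1 := aP_one a ha 0
  have A1 : a (P 0 1) = 0 := A_odd a ha 1 ⟨0, rfl⟩
  have A3 : a (P 0 3) = 0 := A_odd a ha 3 ⟨1, rfl⟩
  have A5 : a (P 0 5) = 0 := A_odd a ha 5 ⟨2, rfl⟩
  have A2 : a (P 0 2) = -1/3 := by
    rw [A_rec a ha (by norm_num : 0 < 2)]
    simp only [Finset.sum_range_succ, Finset.sum_range_zero]
    norm_num [A0, A1]
  have A4 : a (P 0 4) = 2/15 := by
    rw [A_rec a ha (by norm_num : 0 < 4)]
    simp only [Finset.sum_range_succ, Finset.sum_range_zero]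
    norm_num [A0, A1, A2, A3]
  have A6 : a (P 0 6) = -17/315 := by
    rw [A_rec a ha (by norm_num : 0 < 6)]
    simp only [Finset.sum_range_succ, Finset.sum_range_zero]
    norm_num [A0, A1, A2, A3, A4, A5]
  refine ⟨?_, ?_, ?_, ?_, ?_⟩
  · rw [linTree_eq_P]; exact A0
  · rw [linTree_eq_P]; exact A2
  · rw [linTree_eq_P]; exact A4
  · rw [linTree_eq_P]; exact A6
  · intro n hn
    rw [linTree_eq_P]
    exact A_odd a ha n hn
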